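/- arXiv:2209.01528 — 2 statements merged into one kernel-verified Lean document; each statement's English description precedes it below -/
import Mathlib

section
/- Let η > 0, φ₀ ∈ (0,1), let c̄ : [0,T] → ℝ be continuous with 0 ≤ c̄(t) ≤ 1, and let φ : [0,T] → ℝ be differentiable with φ(0) = φ₀ and φ'(t) = η (1 − φ(t)) c̄(t). Then 0 ≤ φ'(t) ≤ η (1 − φ₀) ≤ η for all t ∈ [0,T]; in particular φ is monotone nondecreasing. -/
theorem porosity_derivative_bound
    (T η φ₀ : ℝ) (hη : 0 < η) (hφ₀ : φ₀ ∈ Set.Ioo (0:ℝ) 1)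
    (c : ℝ → ℝ) (hc_cont : ContinuousOn c (Set.Icc 0 T))
    (hc_bd : ∀ t ∈ Set.Icc (0:ℝ) T, 0 ≤ c t ∧ c t ≤ 1)
    (φ : ℝ → ℝ) (hφ0 : φ 0 = φ₀)
    (hφ' : ∀ t ∈ Set.Icc (0:ℝ) T, HasDerivAt φ (η * (1 - φ t) * c t) t) :
    (∀ t ∈ Set.Icc (0:ℝ) T,
      0 ≤ η * (1 - φ t) * c t ∧ η * (1 - φ t) * c t ≤ η * (1 - φ₀) ∧
        η * (1 - φ₀) ≤ η) ∧
    MonotoneOn φ (Set.Icc 0 T) := by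
  obtain ⟨hφ₀0, hφ₀1⟩ := hφ₀
  rcases lt_or_ge T 0 with hT | hT
  · have hempty : Set.Icc (0:ℝ) T = ∅ := Set.Icc_eq_empty (by linarith)
    constructor
    · intro t ht; rw [hempty] at ht; exact absurd ht (Set.notMem_empty t)
    · intro a ha; rw [hempty] at ha; exact absurd ha (Set.notMem_empty a)
  -- extend c continuously to all of ℝ
  set g : ℝ → ℝ := Set.IccExtend hT ((Set.Icc (0:ℝ) T).restrict c) with hgdef
  have hg_cont : Continuous g :=
    (continuousOn_iff_continuous_restrict.mp hc_cont).Icc_extend'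
  have hg_eq : ∀ t ∈ Set.Icc (0:ℝ) T, g t = c t := by
    intro t ht
    simp [hgdef, Set.IccExtend_of_mem hT _ ht]; rfl
  have hg_mem : ∀ t, 0 ≤ g t ∧ g t ≤ 1 := by
    intro t
    exact hc_bd _ (Set.projIcc (0:ℝ) T hT t).2
  -- the integrating factor
  set F : ℝ → ℝ := fun t => ∫ s in (0:ℝ)..t, η * g s with hFdef
  have hF' : ∀ t, HasDerivAt F (η * g t) t := by
    intro t
    exact ((continuous_const.mul hg_cont).integral_hasStrictDerivAt 0 t).hasDerivAt
  have hF0 : F 0 = 0 := by simp [hFdef]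
  have hF_nonneg : ∀ t ∈ Set.Icc (0:ℝ) T, 0 ≤ F t := by
    intro t ht
    exact intervalIntegral.integral_nonneg ht.1
      (fun s _ => mul_nonneg hη.le (hg_mem s).1)
  -- G is constant on [0,T]
  set G : ℝ → ℝ := fun t => (1 - φ t) * Real.exp (F t) with hGdef
  have hG' : ∀ t ∈ Set.Icc (0:ℝ) T, HasDerivAt G 0 t := by
    intro t ht
    have h1 : HasDerivAt (fun x => 1 - φ x) (-(η * (1 - φ t) * c t)) t :=
      (hφ' t ht).const_sub 1
    have h2 : HasDerivAt (fun x => Real.exp (F x)) (Real.exp (F t) * (η * g t)) t :=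
      (hF' t).exp
    have := h1.mul h2
    have hgc := hg_eq t ht
    exact this.congr_deriv (by rw [hgc]; ring)
  have hGcont : ContinuousOn G (Set.Icc 0 T) :=
    fun t ht => ((hG' t ht).continuousAt).continuousWithinAt
  have hGconst : ∀ t ∈ Set.Icc (0:ℝ) T, G t = G 0 := by
    apply constant_of_has_deriv_right_zero hGcont
    intro x hx
    exact (hG' x (Set.mem_Icc_of_Ico hx)).hasDerivWithinAt
  have hG0 : G 0 = 1 - φ₀ := by simp [hGdef, hF0, hφ0]
  have hkey : ∀ t ∈ Set.Icc (0:ℝ) T, 0 < 1 - φ t ∧ 1 - φ t ≤ 1 - φ₀ := by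
    intro t ht
    have hc1 : (1 - φ t) * Real.exp (F t) = 1 - φ₀ := by
      have := hGconst t ht; rw [hG0] at this; exact this
    have hE1 : 1 ≤ Real.exp (F t) := Real.one_le_exp (hF_nonneg t ht)
    have hEpos : 0 < Real.exp (F t) := Real.exp_pos _
    constructor
    · nlinarith
    · nlinarith
  refine ⟨?_, ?_⟩
  · intro t ht
    obtain ⟨h1, h2⟩ := hkey t ht
    obtain ⟨hc0, hc1⟩ := hc_bd t ht
    refine ⟨by positivity, ?_, ?_⟩
    · nlinarith [mul_nonneg (mul_nonneg hη.le h1.le) (sub_nonneg.mpr hc1),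
        mul_le_mul_of_nonneg_left h2 hη.le]
    · nlinarith
  · apply monotoneOn_of_deriv_nonneg (convex_Icc 0 T)
    · intro t ht
      exact ((hφ' t ht).continuousAt).continuousWithinAt
    · intro t ht
      rw [interior_Icc] at ht
      exact ((hφ' t (Set.mem_Icc_of_Ioo ht)).differentiableAt).differentiableWithinAt
    · intro t ht
      rw [interior_Icc] at ht
      have ht' := Set.mem_Icc_of_Ioo ht
      rw [(hφ' t ht').deriv]
      obtain ⟨h1, _⟩ := hkey t ht'
      obtain ⟨hc0, _⟩ := hc_bd t ht'
      positivity
end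

section
/- Let η > 0 and φ₀ ∈ (0,1). Suppose φ, φ_h : [0,T] → ℝ are differentiable with φ(0) = φ_h(0) = φ₀, φ'(t) = η (1 − φ(t)) c(t), φ_h'(t) = η (1 − φ_h(t)) c_h(t), where c, c_h : [0,T] → ℝ are continuous with values in [0,1], and φ(t), φ_h(t) ∈ [φ₀, 1] for all t. Then |φ(t) − φ_h(t)| ≤ η e^{η t} ∫₀ᵗ |c(s) − c_h(s)| ds for all t ∈ [0,T]. -/
open Set intervalIntegral MeasureTheory

theorem porosity_stability
    (T η φ₀ : ℝ) (hη : 0 < η) (hφ₀ : φ₀ ∈ Set.Ioo (0:ℝ) 1)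
    (c ch : ℝ → ℝ)
    (hc_cont : ContinuousOn c (Set.Icc 0 T)) (hch_cont : ContinuousOn ch (Set.Icc 0 T))
    (hc_bd : ∀ t ∈ Set.Icc (0:ℝ) T, c t ∈ Set.Icc (0:ℝ) 1)
    (hch_bd : ∀ t ∈ Set.Icc (0:ℝ) T, ch t ∈ Set.Icc (0:ℝ) 1)
    (φ φh : ℝ → ℝ) (h0 : φ 0 = φ₀) (h0h : φh 0 = φ₀)
    (hφ' : ∀ t ∈ Set.Icc (0:ℝ) T, HasDerivAt φ (η * (1 - φ t) * c t) t)
    (hφh' : ∀ t ∈ Set.Icc (0:ℝ) T, HasDerivAt φh (η * (1 - φh t) * ch t) t)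
    (hφ_bd : ∀ t ∈ Set.Icc (0:ℝ) T, φ t ∈ Set.Icc φ₀ 1)
    (hφh_bd : ∀ t ∈ Set.Icc (0:ℝ) T, φh t ∈ Set.Icc φ₀ 1) :
    ∀ t ∈ Set.Icc (0:ℝ) T,
      |φ t - φh t| ≤ η * Real.exp (η * t) * ∫ s in (0:ℝ)..t, |c s - ch s| := by
  intro t ht
  obtain ⟨ht0, htT⟩ := ht
  rcases eq_or_lt_of_le ht0 with h | h
  · subst h
    simp [h0, h0h]
  -- notation
  set ψ' : ℝ → ℝ := fun s => η * (1 - φ s) * c s - η * (1 - φh s) * ch s with hψ'def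
  set g : ℝ → ℝ := fun s => η * |c s - ch s| + η * |φ s - φh s| with hgdef
  -- continuity facts on Icc 0 T
  have hφc : ContinuousOn φ (Icc 0 T) := fun s hs => (hφ' s hs).continuousAt.continuousWithinAt
  have hφhc : ContinuousOn φh (Icc 0 T) := fun s hs => (hφh' s hs).continuousAt.continuousWithinAt
  have hψc : ContinuousOn (fun s => φ s - φh s) (Icc 0 T) := hφc.sub hφhc
  have hg_cont : ContinuousOn g (Icc 0 T) :=
    (continuousOn_const.mul (hc_cont.sub hch_cont).abs).add (continuousOn_const.mul hψc.abs)
  have hψ'_cont : ContinuousOn ψ' (Icc 0 T) :=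
    ((continuousOn_const.mul (continuousOn_const.sub hφc)).mul hc_cont).sub
      ((continuousOn_const.mul (continuousOn_const.sub hφhc)).mul hch_cont)
  -- pointwise bound |ψ' s| ≤ g s
  have key : ∀ s ∈ Icc (0:ℝ) T, |ψ' s| ≤ g s := by
    intro s hs
    have ha := hφ_bd s hs
    have hb := hφh_bd s hs
    have hds := hch_bd s hs
    have h1 : ψ' s = η * ((1 - φ s) * (c s - ch s) + (φh s - φ s) * ch s) := by
      simp only [hψ'def]; ring
    rw [h1, abs_mul, abs_of_pos hη]
    have h2 : |(1 - φ s) * (c s - ch s) + (φh s - φ s) * ch s|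
        ≤ |c s - ch s| + |φ s - φh s| := by
      calc |(1 - φ s) * (c s - ch s) + (φh s - φ s) * ch s|
          ≤ |(1 - φ s) * (c s - ch s)| + |(φh s - φ s) * ch s| := abs_add_le _ _
        _ = |1 - φ s| * |c s - ch s| + |φh s - φ s| * |ch s| := by rw [abs_mul, abs_mul]
        _ ≤ |c s - ch s| + |φ s - φh s| := by
            have e1 : |1 - φ s| ≤ 1 := by
              rw [abs_of_nonneg (by linarith [ha.2])]
              linarith [ha.1, hφ₀.1]
            have e2 : |ch s| ≤ 1 := by
              rw [abs_of_nonneg hds.1]; exact hds.2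
            have e3 : |φh s - φ s| = |φ s - φh s| := abs_sub_comm _ _
            rw [e3]
            nlinarith [abs_nonneg (c s - ch s), abs_nonneg (φ s - φh s)]
    have : g s = η * |c s - ch s| + η * |φ s - φh s| := rfl
    rw [this]
    nlinarith [h2]
  -- integrability helpers
  have hsub : ∀ x ∈ Icc (0:ℝ) t, Icc (0:ℝ) x ⊆ Icc 0 T := by
    intro x hx
    exact Icc_subset_Icc le_rfl (le_trans hx.2 htT)
  have hg_int : ∀ x ∈ Icc (0:ℝ) t, IntervalIntegrable g volume 0 x := by
    intro x hx
    exact (hg_cont.mono (hsub x hx)).intervalIntegrable_of_Icc hx.1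
  -- main bound : |ψ x| ≤ F x for x ∈ Icc 0 t
  have hψF : ∀ x ∈ Icc (0:ℝ) t, |φ x - φh x| ≤ ∫ s in (0:ℝ)..x, g s := by
    intro x hx
    have hx' : Icc (0:ℝ) x ⊆ Icc 0 T := hsub x hx
    have hder : ∀ s ∈ uIcc (0:ℝ) x, HasDerivAt (fun u => φ u - φh u) (ψ' s) s := by
      intro s hs
      rw [uIcc_of_le hx.1] at hs
      exact (hφ' s (hx' hs)).sub (hφh' s (hx' hs))
    have hint : IntervalIntegrable ψ' volume 0 x :=
      (hψ'_cont.mono hx').intervalIntegrable_of_Icc hx.1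
    have heq : (∫ s in (0:ℝ)..x, ψ' s) = (φ x - φh x) - (φ 0 - φh 0) :=
      intervalIntegral.integral_eq_sub_of_hasDerivAt hder hint
    have hψx : φ x - φh x = ∫ s in (0:ℝ)..x, ψ' s := by
      rw [heq, h0, h0h]; ring
    rw [hψx]
    calc |∫ s in (0:ℝ)..x, ψ' s| ≤ ∫ s in (0:ℝ)..x, |ψ' s| :=
          intervalIntegral.abs_integral_le_integral_abs hx.1
      _ ≤ ∫ s in (0:ℝ)..x, g s := by
          apply intervalIntegral.integral_mono_on hx.1 hint.abs (hg_int x hx)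
          intro s hs
          exact key s (hx' hs)
  -- define F, A, D
  set F : ℝ → ℝ := fun x => ∫ s in (0:ℝ)..x, g s with hFdef
  set A : ℝ → ℝ := fun x => ∫ s in (0:ℝ)..x, η * |c s - ch s| with hAdef
  set D : ℝ → ℝ := fun x => A x - Real.exp (-η * x) * F x with hDdef
  have hcc_cont : ContinuousOn (fun s => η * |c s - ch s|) (Icc 0 T) :=
    continuousOn_const.mul (hc_cont.sub hch_cont).abs
  have hcc_int : ∀ x ∈ Icc (0:ℝ) t, IntervalIntegrable (fun s => η * |c s - ch s|) volume 0 x := by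
    intro x hx
    exact (hcc_cont.mono (hsub x hx)).intervalIntegrable_of_Icc hx.1
  -- continuity of F, A on Icc 0 t
  have hF_cont : ContinuousOn F (Icc 0 t) := by
    have := intervalIntegral.continuousOn_primitive_interval (μ := volume) (a := (0:ℝ)) (b := t)
      (f := g) ?_
    · exact this.mono (by rw [uIcc_of_le h.le])
    · rw [uIcc_of_le h.le]
      exact ((hg_cont.mono (hsub t ⟨h.le, le_rfl⟩)).integrableOn_compact isCompact_Icc)
  have hA_cont : ContinuousOn A (Icc 0 t) := by
    have := intervalIntegral.continuousOn_primitive_interval (μ := volume) (a := (0:ℝ)) (b := t)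
      (f := fun s => η * |c s - ch s|) ?_
    · exact this.mono (by rw [uIcc_of_le h.le])
    · rw [uIcc_of_le h.le]
      exact ((hcc_cont.mono (hsub t ⟨h.le, le_rfl⟩)).integrableOn_compact isCompact_Icc)
  have hD_cont : ContinuousOn D (Icc 0 t) :=
    hA_cont.sub (((Real.continuous_exp.comp (continuous_const.mul continuous_id)).continuousOn).mul
      hF_cont)
  -- derivative of D at interior points
  have hD_deriv : ∀ x ∈ Ioo (0:ℝ) t, HasDerivAt D
      (η * |c x - ch x| - (-η * Real.exp (-η * x) * F x + Real.exp (-η * x) * g x)) x := by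
    intro x hx
    have hxIcc : x ∈ Icc (0:ℝ) t := ⟨hx.1.le, hx.2.le⟩
    have hmem : Icc (0:ℝ) T ∈ nhds x :=
      Icc_mem_nhds hx.1 (lt_of_lt_of_le hx.2 htT)
    have hcA : ContinuousAt (fun s => η * |c s - ch s|) x :=
      hcc_cont.continuousAt hmem
    have hcG : ContinuousAt g x := hg_cont.continuousAt hmem
    have hA' : HasDerivAt A (η * |c x - ch x|) x :=
      intervalIntegral.integral_hasDerivAt_right (hcc_int x hxIcc)
        ⟨Icc 0 T, hmem, hcc_cont.aestronglyMeasurable measurableSet_Icc⟩ hcA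
    have hF' : HasDerivAt F (g x) x :=
      intervalIntegral.integral_hasDerivAt_right (hg_int x hxIcc)
        ⟨Icc 0 T, hmem, hg_cont.aestronglyMeasurable measurableSet_Icc⟩ hcG
    have hexp : HasDerivAt (fun u => Real.exp (-η * u)) (-η * Real.exp (-η * x)) x := by
      have h' := ((hasDerivAt_id x).const_mul (-η)).exp
      have : Real.exp (-η * id x) * (-η * 1) = -η * Real.exp (-η * x) := by simp [mul_comm]
      rw [this] at h'
      exact h'
    exact hA'.sub (hexp.mul hF')
  -- D is monotone on Icc 0 t
  have hD_mono : MonotoneOn D (Icc 0 t) := by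
    apply monotoneOn_of_deriv_nonneg (convex_Icc 0 t) hD_cont
    · intro x hx
      rw [interior_Icc] at hx
      exact ((hD_deriv x hx).differentiableAt).differentiableWithinAt
    · intro x hx
      rw [interior_Icc] at hx
      rw [(hD_deriv x hx).deriv]
      have hxIcc : x ∈ Icc (0:ℝ) t := ⟨hx.1.le, hx.2.le⟩
      have h1 : |φ x - φh x| ≤ F x := hψF x hxIcc
      have h2 : Real.exp (-η * x) ≤ 1 := by
        rw [← Real.exp_zero]
        apply Real.exp_le_exp.mpr
        nlinarith [hx.1]
      have h3 : (0:ℝ) < Real.exp (-η * x) := Real.exp_pos _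
      have h4 : (0:ℝ) ≤ |c x - ch x| := abs_nonneg _
      have h5 : g x = η * |c x - ch x| + η * |φ x - φh x| := rfl
      have h6 : 0 ≤ (1 - Real.exp (-η * x)) * |c x - ch x| := mul_nonneg (by linarith) h4
      have h7 : 0 ≤ Real.exp (-η * x) * (F x - |φ x - φh x|) := mul_nonneg h3.le (by linarith)
      rw [h5]
      nlinarith [mul_nonneg hη.le h6, mul_nonneg hη.le h7]
  -- conclude
  have hD0 : D 0 = 0 := by
    simp [hDdef, hAdef, hFdef]
  have hDt : 0 ≤ D t := by
    rw [← hD0]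
    exact hD_mono ⟨le_rfl, h.le⟩ ⟨h.le, le_rfl⟩ h.le
  have hFA : Real.exp (-η * t) * F t ≤ A t := by
    simp only [hDdef] at hDt; linarith
  have hFA' : F t ≤ Real.exp (η * t) * A t := by
    have := mul_le_mul_of_nonneg_left hFA (Real.exp_pos (η * t)).le
    rw [← mul_assoc, ← Real.exp_add] at this
    simpa using this
  have hAt : A t = η * ∫ s in (0:ℝ)..t, |c s - ch s| := by
    simp [hAdef, intervalIntegral.integral_const_mul]
  calc |φ t - φh t| ≤ F t := hψF t ⟨h.le, le_rfl⟩
    _ ≤ Real.exp (η * t) * A t := hFA'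
    _ = η * Real.exp (η * t) * ∫ s in (0:ℝ)..t, |c s - ch s| := by rw [hAt]; ring
end
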